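/- Let a > 0, μ > 1, h ∈ ℝ, and let H(q,p) = (p₁² + p₂²)/2 − a/(q₁² + μq₂²)^{1/2} be the Hamiltonian of the Anisotropic Kepler Problem. Let (q,p) : I → (ℝ² \ {0}) × ℝ² be a curve on an open interval I solving Hamilton's equations for H with H(q(t),p(t)) = h for all t ∈ I. Let s : I → J be the C¹ diffeomorphism onto an open interval J determined (up to an additive constant) by s'(t) = 1/(2a·(q₁(t)² + μq₂(t)²)^{1/2}), with inverse t(·) : J → I. Then the reparametrized curve (Q(s), P(s)) = (q(t(s)), p(t(s))) solves Hamilton's equations for the Hamiltonian H̃(Q,P) = (Q₁² + μQ₂²)·((P₁² + P₂²) − 2h)²/4 on J, and moreover H̃(Q(s),P(s)) = a² for all s ∈ J. -/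

import Mathlib

lemma fderiv_line {E : Type*} [NormedAddCommGroup E] [NormedSpace ℝ E]
    {K : E → ℝ} {z v : E} {d : ℝ}
    (hK : DifferentiableAt ℝ K z)
    (hd : HasDerivAt (fun t : ℝ => K (z + t • v)) d 0) :
    fderiv ℝ K z v = d := by
  have h1 : HasDerivAt (fun t : ℝ => z + t • v) v 0 := by
    simpa using ((hasDerivAt_id (0 : ℝ)).smul_const v).const_add z
  have h2 : HasDerivAt (fun t : ℝ => K (z + t • v)) (fderiv ℝ K z v) 0 := by
    have hz : HasFDerivAt K (fderiv ℝ K z) (z + (0:ℝ) • v) := by simpa using hK.hasFDerivAt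
    have := hz.comp_hasDerivAt (0 : ℝ) h1
    exact this
  exact (h2.unique hd)

section
variable (a μ h : ℝ)

lemma H_diff {x y : ℝ × ℝ} (hx : 0 < x.1 ^ 2 + μ * x.2 ^ 2) :
    DifferentiableAt ℝ (fun z : (ℝ × ℝ) × (ℝ × ℝ) =>
      (z.2.1 ^ 2 + z.2.2 ^ 2) / 2 - a / Real.sqrt (z.1.1 ^ 2 + μ * z.1.2 ^ 2)) (x, y) := by
  have hB : DifferentiableAt ℝ
      (fun z : (ℝ × ℝ) × (ℝ × ℝ) => z.1.1 ^ 2 + μ * z.1.2 ^ 2) (x, y) := by fun_prop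
  have hs : DifferentiableAt ℝ
      (fun z : (ℝ × ℝ) × (ℝ × ℝ) => Real.sqrt (z.1.1 ^ 2 + μ * z.1.2 ^ 2)) (x, y) :=
    hB.sqrt (ne_of_gt hx)
  have hs0 : Real.sqrt (x.1 ^ 2 + μ * x.2 ^ 2) ≠ 0 :=
    ne_of_gt (Real.sqrt_pos.mpr hx)
  have h1 : DifferentiableAt ℝ
      (fun z : (ℝ × ℝ) × (ℝ × ℝ) => a / Real.sqrt (z.1.1 ^ 2 + μ * z.1.2 ^ 2)) (x, y) :=
    by simp only [div_eq_mul_inv]; exact (differentiableAt_const a).mul (hs.inv hs0)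
  exact ((by fun_prop : DifferentiableAt ℝ
      (fun z : (ℝ × ℝ) × (ℝ × ℝ) => (z.2.1 ^ 2 + z.2.2 ^ 2) / 2) (x, y))).sub h1

lemma fderiv_H_p1 {x y : ℝ × ℝ} (hx : 0 < x.1 ^ 2 + μ * x.2 ^ 2) :
    fderiv ℝ (fun z : (ℝ × ℝ) × (ℝ × ℝ) =>
      (z.2.1 ^ 2 + z.2.2 ^ 2) / 2 - a / Real.sqrt (z.1.1 ^ 2 + μ * z.1.2 ^ 2)) (x, y)
      (((0, 0), (1, 0))) = y.1 := by
  apply fderiv_line (H_diff a μ hx)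
  simp only [Prod.fst_add, Prod.snd_add, Prod.smul_fst, Prod.smul_snd, smul_eq_mul,
    mul_one, mul_zero, add_zero]
  have : HasDerivAt (fun t : ℝ => ((y.1 + t) ^ 2 + y.2 ^ 2) / 2
      - a / Real.sqrt (x.1 ^ 2 + μ * x.2 ^ 2)) (2 * (y.1 + 0) ^ 1 * 1 / 2) 0 :=
    ((((hasDerivAt_id (0:ℝ)).const_add y.1).pow 2).add_const _).div_const 2 |>.sub_const _
  convert this using 1
  ring
end



section
variable (a μ h : ℝ)

lemma fderiv_H_p2 {x y : ℝ × ℝ} (hx : 0 < x.1 ^ 2 + μ * x.2 ^ 2) :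
    fderiv ℝ (fun z : (ℝ × ℝ) × (ℝ × ℝ) =>
      (z.2.1 ^ 2 + z.2.2 ^ 2) / 2 - a / Real.sqrt (z.1.1 ^ 2 + μ * z.1.2 ^ 2)) (x, y)
      (((0, 0), (0, 1))) = y.2 := by
  apply fderiv_line (H_diff a μ hx)
  simp only [Prod.fst_add, Prod.snd_add, Prod.smul_fst, Prod.smul_snd, smul_eq_mul,
    mul_one, mul_zero, add_zero]
  have : HasDerivAt (fun t : ℝ => (y.1 ^ 2 + (y.2 + t) ^ 2) / 2
      - a / Real.sqrt (x.1 ^ 2 + μ * x.2 ^ 2)) (2 * (y.2 + 0) ^ 1 * 1 / 2) 0 :=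
    ((((hasDerivAt_id (0:ℝ)).const_add y.2).pow 2).const_add _).div_const 2 |>.sub_const _
  convert this using 1
  ring

lemma fderiv_H_q1 {x y : ℝ × ℝ} (hx : 0 < x.1 ^ 2 + μ * x.2 ^ 2) :
    fderiv ℝ (fun z : (ℝ × ℝ) × (ℝ × ℝ) =>
      (z.2.1 ^ 2 + z.2.2 ^ 2) / 2 - a / Real.sqrt (z.1.1 ^ 2 + μ * z.1.2 ^ 2)) (x, y)
      (((1, 0), (0, 0))) = a * x.1 / Real.sqrt (x.1 ^ 2 + μ * x.2 ^ 2) ^ 3 := by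
  have hr : Real.sqrt (x.1 ^ 2 + μ * x.2 ^ 2) ≠ 0 := ne_of_gt (Real.sqrt_pos.mpr hx)
  apply fderiv_line (H_diff a μ hx)
  simp only [Prod.fst_add, Prod.snd_add, Prod.smul_fst, Prod.smul_snd, smul_eq_mul,
    mul_one, mul_zero, add_zero]
  have hu : HasDerivAt (fun t : ℝ => (x.1 + t) ^ 2 + μ * x.2 ^ 2) (2 * (x.1 + 0) ^ 1 * 1) 0 :=
    (((hasDerivAt_id (0:ℝ)).const_add x.1).pow 2).add_const _
  have hu0 : (x.1 + 0) ^ 2 + μ * x.2 ^ 2 ≠ 0 := by simpa using ne_of_gt hx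
  have hs := hu.sqrt hu0
  have hdiv := (hasDerivAt_const (0:ℝ) a).div hs (by
    simpa using Real.sqrt_ne_zero'.mpr (by simpa using hx))
  have := hdiv.const_sub ((y.1 ^ 2 + y.2 ^ 2) / 2)
  refine this.congr_deriv ?_; symm
  have h2 : Real.sqrt ((x.1 + 0) ^ 2 + μ * x.2 ^ 2) = Real.sqrt (x.1 ^ 2 + μ * x.2 ^ 2) := by
    norm_num
  rw [h2]
  have hsq : Real.sqrt (x.1 ^ 2 + μ * x.2 ^ 2) ^ 2 = x.1 ^ 2 + μ * x.2 ^ 2 :=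
    Real.sq_sqrt (le_of_lt hx)
  have h3 : Real.sqrt (x.1 ^ 2 + μ * x.2 ^ 2) ^ 3
      = (x.1 ^ 2 + μ * x.2 ^ 2) * Real.sqrt (x.1 ^ 2 + μ * x.2 ^ 2) := by
    rw [pow_succ, hsq]
  rw [h3]
  field_simp
  rw [Real.sq_sqrt (by linarith)]
  ring

lemma fderiv_H_q2 {x y : ℝ × ℝ} (hx : 0 < x.1 ^ 2 + μ * x.2 ^ 2) :
    fderiv ℝ (fun z : (ℝ × ℝ) × (ℝ × ℝ) =>
      (z.2.1 ^ 2 + z.2.2 ^ 2) / 2 - a / Real.sqrt (z.1.1 ^ 2 + μ * z.1.2 ^ 2)) (x, y)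
      (((0, 1), (0, 0))) = a * μ * x.2 / Real.sqrt (x.1 ^ 2 + μ * x.2 ^ 2) ^ 3 := by
  have hr : Real.sqrt (x.1 ^ 2 + μ * x.2 ^ 2) ≠ 0 := ne_of_gt (Real.sqrt_pos.mpr hx)
  apply fderiv_line (H_diff a μ hx)
  simp only [Prod.fst_add, Prod.snd_add, Prod.smul_fst, Prod.smul_snd, smul_eq_mul,
    mul_one, mul_zero, add_zero]
  have hu : HasDerivAt (fun t : ℝ => x.1 ^ 2 + μ * (x.2 + t) ^ 2)
      (μ * (2 * (x.2 + 0) ^ 1 * 1)) 0 :=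
    ((((hasDerivAt_id (0:ℝ)).const_add x.2).pow 2).const_mul μ).const_add _
  have hu0 : x.1 ^ 2 + μ * (x.2 + 0) ^ 2 ≠ 0 := by simpa using ne_of_gt hx
  have hs := hu.sqrt hu0
  have hdiv := (hasDerivAt_const (0:ℝ) a).div hs (by
    simpa using Real.sqrt_ne_zero'.mpr (by simpa using hx))
  have := hdiv.const_sub ((y.1 ^ 2 + y.2 ^ 2) / 2)
  refine this.congr_deriv ?_; symm
  have h2 : Real.sqrt (x.1 ^ 2 + μ * (x.2 + 0) ^ 2) = Real.sqrt (x.1 ^ 2 + μ * x.2 ^ 2) := by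
    norm_num
  rw [h2]
  have hsq : Real.sqrt (x.1 ^ 2 + μ * x.2 ^ 2) ^ 2 = x.1 ^ 2 + μ * x.2 ^ 2 :=
    Real.sq_sqrt (le_of_lt hx)
  have h3 : Real.sqrt (x.1 ^ 2 + μ * x.2 ^ 2) ^ 3
      = (x.1 ^ 2 + μ * x.2 ^ 2) * Real.sqrt (x.1 ^ 2 + μ * x.2 ^ 2) := by
    rw [pow_succ, hsq]
  rw [h3]
  field_simp
  rw [Real.sq_sqrt (by linarith)]
  ring

lemma fderiv_G_p1 (x y : ℝ × ℝ) :
    fderiv ℝ (fun z : (ℝ × ℝ) × (ℝ × ℝ) => (z.1.1 ^ 2 + μ * z.1.2 ^ 2)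
        * ((z.2.1 ^ 2 + z.2.2 ^ 2) - 2 * h) ^ 2 / 4) (x, y)
      (((0, 0), (1, 0)))
      = (x.1 ^ 2 + μ * x.2 ^ 2) * ((y.1 ^ 2 + y.2 ^ 2) - 2 * h) * y.1 := by
  apply fderiv_line (by fun_prop)
  simp only [Prod.fst_add, Prod.snd_add, Prod.smul_fst, Prod.smul_snd, smul_eq_mul,
    mul_one, mul_zero, add_zero]
  have inner : HasDerivAt (fun t : ℝ => (y.1 + t) ^ 2 + y.2 ^ 2 - 2 * h)
      (2 * (y.1 + 0) ^ 1 * 1) 0 :=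
    ((((hasDerivAt_id (0:ℝ)).const_add y.1).pow 2).add_const _).sub_const _
  have := ((inner.pow 2).const_mul (x.1 ^ 2 + μ * x.2 ^ 2)).div_const 4
  refine this.congr_deriv ?_; symm
  ring

lemma fderiv_G_p2 (x y : ℝ × ℝ) :
    fderiv ℝ (fun z : (ℝ × ℝ) × (ℝ × ℝ) => (z.1.1 ^ 2 + μ * z.1.2 ^ 2)
        * ((z.2.1 ^ 2 + z.2.2 ^ 2) - 2 * h) ^ 2 / 4) (x, y)
      (((0, 0), (0, 1)))
      = (x.1 ^ 2 + μ * x.2 ^ 2) * ((y.1 ^ 2 + y.2 ^ 2) - 2 * h) * y.2 := by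
  apply fderiv_line (by fun_prop)
  simp only [Prod.fst_add, Prod.snd_add, Prod.smul_fst, Prod.smul_snd, smul_eq_mul,
    mul_one, mul_zero, add_zero]
  have inner : HasDerivAt (fun t : ℝ => y.1 ^ 2 + (y.2 + t) ^ 2 - 2 * h)
      (2 * (y.2 + 0) ^ 1 * 1) 0 :=
    ((((hasDerivAt_id (0:ℝ)).const_add y.2).pow 2).const_add _).sub_const _
  have := ((inner.pow 2).const_mul (x.1 ^ 2 + μ * x.2 ^ 2)).div_const 4
  refine this.congr_deriv ?_; symm
  ring

lemma fderiv_G_q1 (x y : ℝ × ℝ) :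
    fderiv ℝ (fun z : (ℝ × ℝ) × (ℝ × ℝ) => (z.1.1 ^ 2 + μ * z.1.2 ^ 2)
        * ((z.2.1 ^ 2 + z.2.2 ^ 2) - 2 * h) ^ 2 / 4) (x, y)
      (((1, 0), (0, 0)))
      = x.1 * ((y.1 ^ 2 + y.2 ^ 2) - 2 * h) ^ 2 / 2 := by
  apply fderiv_line (by fun_prop)
  simp only [Prod.fst_add, Prod.snd_add, Prod.smul_fst, Prod.smul_snd, smul_eq_mul,
    mul_one, mul_zero, add_zero]
  have inner : HasDerivAt (fun t : ℝ => (x.1 + t) ^ 2 + μ * x.2 ^ 2)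
      (2 * (x.1 + 0) ^ 1 * 1) 0 :=
    (((hasDerivAt_id (0:ℝ)).const_add x.1).pow 2).add_const _
  have := (inner.mul_const (((y.1 ^ 2 + y.2 ^ 2) - 2 * h) ^ 2)).div_const 4
  refine this.congr_deriv ?_; symm
  ring

lemma fderiv_G_q2 (x y : ℝ × ℝ) :
    fderiv ℝ (fun z : (ℝ × ℝ) × (ℝ × ℝ) => (z.1.1 ^ 2 + μ * z.1.2 ^ 2)
        * ((z.2.1 ^ 2 + z.2.2 ^ 2) - 2 * h) ^ 2 / 4) (x, y)
      (((0, 1), (0, 0)))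
      = μ * x.2 * ((y.1 ^ 2 + y.2 ^ 2) - 2 * h) ^ 2 / 2 := by
  apply fderiv_line (by fun_prop)
  simp only [Prod.fst_add, Prod.snd_add, Prod.smul_fst, Prod.smul_snd, smul_eq_mul,
    mul_one, mul_zero, add_zero]
  have inner : HasDerivAt (fun t : ℝ => x.1 ^ 2 + μ * (x.2 + t) ^ 2)
      (μ * (2 * (x.2 + 0) ^ 1 * 1)) 0 :=
    ((((hasDerivAt_id (0:ℝ)).const_add x.2).pow 2).const_mul μ).const_add _
  have := (inner.mul_const (((y.1 ^ 2 + y.2 ^ 2) - 2 * h) ^ 2)).div_const 4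
  refine this.congr_deriv ?_; symm
  ring

end


/-- A curve `(q, p)` on the set `I ⊆ ℝ` solves Hamilton's equations for the
Hamiltonian `K : ℝ² × ℝ² → ℝ` (with `ℝ²` modelled by `ℝ × ℝ`):
`qᵢ' = ∂K/∂pᵢ` and `pᵢ' = −∂K/∂qᵢ` on `I`, `i = 1, 2`. -/
def IsHamSol2 (K : (ℝ × ℝ) × (ℝ × ℝ) → ℝ) (q p : ℝ → ℝ × ℝ) (I : Set ℝ) : Prop :=
  ∀ t ∈ I,
    HasDerivAt (fun t' => (q t').1) (fderiv ℝ K (q t, p t) (((0, 0), (1, 0)))) t ∧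
    HasDerivAt (fun t' => (q t').2) (fderiv ℝ K (q t, p t) (((0, 0), (0, 1)))) t ∧
    HasDerivAt (fun t' => (p t').1) (-(fderiv ℝ K (q t, p t) (((1, 0), (0, 0))))) t ∧
    HasDerivAt (fun t' => (p t').2) (-(fderiv ℝ K (q t, p t) (((0, 1), (0, 0))))) t

/-- **The Anisotropic Kepler Problem on the level `H = h` reduces, after a
reparametrization of time, to the Hamiltonian
`H̃(Q,P) = (Q₁² + μQ₂²)((P₁² + P₂²) − 2h)²/4` on the level `H̃ = a²`.** -/
theorem akp_reduction_to_geodesic_hamiltonian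
    (a μ h : ℝ) (ha : 0 < a) (hμ : 1 < μ)
    (H : (ℝ × ℝ) × (ℝ × ℝ) → ℝ)
    (hHdef : H = fun z => (z.2.1 ^ 2 + z.2.2 ^ 2) / 2
      - a / Real.sqrt (z.1.1 ^ 2 + μ * z.1.2 ^ 2))
    (I J : Set ℝ) (hI : IsOpen I) (hIconn : I.OrdConnected) (hIne : I.Nonempty)
    (hJ : IsOpen J) (hJconn : J.OrdConnected)
    (q p : ℝ → ℝ × ℝ) (hq0 : ∀ t ∈ I, q t ≠ 0)
    (hsol : IsHamSol2 H q p I)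
    (hHh : ∀ t ∈ I, H (q t, p t) = h)
    (τ σ : ℝ → ℝ)
    (hτmaps : Set.MapsTo τ I J) (hσmaps : Set.MapsTo σ J I)
    (hστ : ∀ t ∈ I, σ (τ t) = t) (hτσ : ∀ s ∈ J, τ (σ s) = s)
    (hτ' : ∀ t ∈ I, HasDerivAt τ
      (1 / (2 * a * Real.sqrt ((q t).1 ^ 2 + μ * (q t).2 ^ 2))) t)
    (hσdiff : ∀ s ∈ J, DifferentiableAt ℝ σ s) :
    IsHamSol2
      (fun z => (z.1.1 ^ 2 + μ * z.1.2 ^ 2)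
        * ((z.2.1 ^ 2 + z.2.2 ^ 2) - 2 * h) ^ 2 / 4)
      (fun s => q (σ s)) (fun s => p (σ s)) J ∧
    ∀ s ∈ J, ((q (σ s)).1 ^ 2 + μ * (q (σ s)).2 ^ 2)
        * (((p (σ s)).1 ^ 2 + (p (σ s)).2 ^ 2) - 2 * h) ^ 2 / 4 = a ^ 2 := by
  subst hHdef
  -- basic positivity at any point of I
  have hpos : ∀ t ∈ I, 0 < (q t).1 ^ 2 + μ * (q t).2 ^ 2 := by
    intro t ht
    have hne := hq0 t ht
    have : (q t).1 ≠ 0 ∨ (q t).2 ≠ 0 := by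
      by_contra hcon
      push_neg at hcon
      exact hne (Prod.ext hcon.1 hcon.2)
    rcases this with h1 | h2
    · nlinarith [sq_nonneg (q t).2, sq_nonneg (q t).1, mul_self_pos.mpr h1]
    · nlinarith [sq_nonneg (q t).1, mul_self_pos.mpr h2]
  -- energy relation
  have hE2 : ∀ t ∈ I, (p t).1 ^ 2 + (p t).2 ^ 2 - 2 * h
      = 2 * a / Real.sqrt ((q t).1 ^ 2 + μ * (q t).2 ^ 2) := by
    intro t ht
    have hE := hHh t ht
    simp only at hE
    have hr : Real.sqrt ((q t).1 ^ 2 + μ * (q t).2 ^ 2) ≠ 0 :=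
      ne_of_gt (Real.sqrt_pos.mpr (hpos t ht))
    field_simp at hE ⊢
    linarith
  -- derivative of σ
  have hσ' : ∀ s ∈ J, HasDerivAt σ
      (2 * a * Real.sqrt ((q (σ s)).1 ^ 2 + μ * (q (σ s)).2 ^ 2)) s := by
    intro s hs
    have ht : σ s ∈ I := hσmaps hs
    have hr : (0:ℝ) < Real.sqrt ((q (σ s)).1 ^ 2 + μ * (q (σ s)).2 ^ 2) :=
      Real.sqrt_pos.mpr (hpos _ ht)
    have hd := (hσdiff s hs).hasDerivAt
    have hcomp := (hτ' (σ s) ht).comp s hd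
    have hid : (τ ∘ σ) =ᶠ[nhds s] id :=
      Filter.eventuallyEq_of_mem (hJ.mem_nhds hs) (fun u hu => hτσ u hu)
    have huniq : 1 / (2 * a * Real.sqrt ((q (σ s)).1 ^ 2 + μ * (q (σ s)).2 ^ 2))
        * deriv σ s = 1 :=
      (hcomp.congr_of_eventuallyEq hid.symm).unique (hasDerivAt_id s)
    have hder : deriv σ s
        = 2 * a * Real.sqrt ((q (σ s)).1 ^ 2 + μ * (q (σ s)).2 ^ 2) := by
      have h2 : 2 * a * Real.sqrt ((q (σ s)).1 ^ 2 + μ * (q (σ s)).2 ^ 2) ≠ 0 := by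
        positivity
      field_simp at huniq
      linarith
    rw [← hder]
    exact hd
  constructor
  · intro s hs
    have ht : σ s ∈ I := hσmaps hs
    have hp0 : 0 < (q (σ s)).1 ^ 2 + μ * (q (σ s)).2 ^ 2 := hpos _ ht
    have hr : (0:ℝ) < Real.sqrt ((q (σ s)).1 ^ 2 + μ * (q (σ s)).2 ^ 2) :=
      Real.sqrt_pos.mpr hp0
    have hsq : Real.sqrt ((q (σ s)).1 ^ 2 + μ * (q (σ s)).2 ^ 2) ^ 2
        = (q (σ s)).1 ^ 2 + μ * (q (σ s)).2 ^ 2 := Real.sq_sqrt (le_of_lt hp0)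
    have hE := hE2 (σ s) ht
    obtain ⟨hq1', hq2', hp1', hp2'⟩ := hsol (σ s) ht
    rw [fderiv_H_p1 a μ hp0] at hq1'
    rw [fderiv_H_p2 a μ hp0] at hq2'
    rw [fderiv_H_q1 a μ hp0] at hp1'
    rw [fderiv_H_q2 a μ hp0] at hp2'
    refine ⟨?_, ?_, ?_, ?_⟩
    · show HasDerivAt (fun s' => (q (σ s')).1) _ s
      rw [fderiv_G_p1 μ h (q (σ s)) (p (σ s)), hE]
      have hcv := hq1'.comp s (hσ' s hs)
      set r := Real.sqrt ((q (σ s)).1 ^ 2 + μ * (q (σ s)).2 ^ 2) with hrdef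
      have hrne : r ≠ 0 := ne_of_gt hr
      refine hcv.congr_deriv ?_; symm
      try rw [← hsq]
      field_simp
    · show HasDerivAt (fun s' => (q (σ s')).2) _ s
      rw [fderiv_G_p2 μ h (q (σ s)) (p (σ s)), hE]
      have hcv := hq2'.comp s (hσ' s hs)
      set r := Real.sqrt ((q (σ s)).1 ^ 2 + μ * (q (σ s)).2 ^ 2) with hrdef
      have hrne : r ≠ 0 := ne_of_gt hr
      refine hcv.congr_deriv ?_; symm
      try rw [← hsq]
      field_simp
    · show HasDerivAt (fun s' => (p (σ s')).1) _ s
      rw [fderiv_G_q1 μ h (q (σ s)) (p (σ s)), hE]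
      have hcv := hp1'.comp s (hσ' s hs)
      set r := Real.sqrt ((q (σ s)).1 ^ 2 + μ * (q (σ s)).2 ^ 2) with hrdef
      have hrne : r ≠ 0 := ne_of_gt hr
      refine hcv.congr_deriv ?_; symm
      try rw [← hsq]
      field_simp
    · show HasDerivAt (fun s' => (p (σ s')).2) _ s
      rw [fderiv_G_q2 μ h (q (σ s)) (p (σ s)), hE]
      have hcv := hp2'.comp s (hσ' s hs)
      set r := Real.sqrt ((q (σ s)).1 ^ 2 + μ * (q (σ s)).2 ^ 2) with hrdef
      have hrne : r ≠ 0 := ne_of_gt hr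
      refine hcv.congr_deriv ?_; symm
      try rw [← hsq]
      field_simp
  · intro s hs
    have ht : σ s ∈ I := hσmaps hs
    have hp0 : 0 < (q (σ s)).1 ^ 2 + μ * (q (σ s)).2 ^ 2 := hpos _ ht
    have hr : (0:ℝ) < Real.sqrt ((q (σ s)).1 ^ 2 + μ * (q (σ s)).2 ^ 2) :=
      Real.sqrt_pos.mpr hp0
    have hsq : Real.sqrt ((q (σ s)).1 ^ 2 + μ * (q (σ s)).2 ^ 2) ^ 2
        = (q (σ s)).1 ^ 2 + μ * (q (σ s)).2 ^ 2 := Real.sq_sqrt (le_of_lt hp0)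
    set r := Real.sqrt ((q (σ s)).1 ^ 2 + μ * (q (σ s)).2 ^ 2) with hrdef
    have hrne : r ≠ 0 := ne_of_gt hr
    rw [hE2 (σ s) ht, ← hsq]
    field_simp
    rw [Real.sqrt_sq hr.le]
    ring
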